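/- For size optimization with compliance C(A) = fᵀ K(A)⁻¹ f, where K(A) = Σ_i A_i K_i with each K_i positive semidefinite and K(A) positive definite, the compliance is a convex and non-increasing function of A on the region where K(A) is positive definite: for each i, ∂C/∂A_i = −uᵀ K_i u ≤ 0 where u = K(A)⁻¹ f. -/

import Mathlib

open Matrix

variable {m : ℕ}

lemma symdot {M : Matrix (Fin m) (Fin m) ℝ} (hM : Mᵀ = M) (x y : Fin m → ℝ) :
    x ⬝ᵥ (M *ᵥ y) = y ⬝ᵥ (M *ᵥ x) := by
  rw [dotProduct_mulVec, ← hM, vecMul_transpose, hM, dotProduct_comm]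

lemma herm_transpose {M : Matrix (Fin m) (Fin m) ℝ} (hM : M.IsHermitian) : Mᵀ = M := by
  exact (show M.IsSymm by simpa [conjTranspose_eq_transpose_of_trivial] using hM)

lemma key_ineq {M : Matrix (Fin m) (Fin m) ℝ} (hM : M.PosDef) (f v : Fin m → ℝ) :
    2 * (f ⬝ᵥ v) - v ⬝ᵥ (M *ᵥ v) ≤ f ⬝ᵥ (M⁻¹ *ᵥ f) := by
  set u := M⁻¹ *ᵥ f with hu
  have hdet : IsUnit M.det := hM.det_pos.ne'.isUnit
  have hMu : M *ᵥ u = f := by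
    rw [hu, mulVec_mulVec, mul_nonsing_inv _ hdet, one_mulVec]
  have hsym : Mᵀ = M := herm_transpose hM.1
  have h0 : 0 ≤ (u - v) ⬝ᵥ (M *ᵥ (u - v)) := by
    simpa using hM.posSemidef.dotProduct_mulVec_nonneg (u - v)
  have hexp : (u - v) ⬝ᵥ (M *ᵥ (u - v)) =
      u ⬝ᵥ (M *ᵥ u) - 2 * (u ⬝ᵥ (M *ᵥ v)) + v ⬝ᵥ (M *ᵥ v) := by
    have := symdot hsym v u
    simp only [mulVec_sub, dotProduct_sub, sub_dotProduct]
    linarith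
  have h1 : f ⬝ᵥ (M⁻¹ *ᵥ f) = u ⬝ᵥ (M *ᵥ u) := by
    rw [← hu, ← hMu]; exact dotProduct_comm _ _
  have h2 : f ⬝ᵥ v = u ⬝ᵥ (M *ᵥ v) := by
    rw [← hMu, dotProduct_comm]; exact symdot hsym v u
  linarith

attribute [local instance] Matrix.linftyOpNormedRing Matrix.linftyOpNormedAlgebra

noncomputable instance : CompleteSpace (Matrix (Fin m) (Fin m) ℝ) :=
  FiniteDimensional.complete ℝ _

noncomputable def gL (f : Fin m → ℝ) : Matrix (Fin m) (Fin m) ℝ →L[ℝ] ℝ :=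
  LinearMap.toContinuousLinearMap
    { toFun := fun M => f ⬝ᵥ (M *ᵥ f)
      map_add' := by intro M N; simp [add_mulVec, dotProduct_add]
      map_smul' := by intro c M; simp [smul_mulVec] }

lemma gL_apply (f : Fin m → ℝ) (M : Matrix (Fin m) (Fin m) ℝ) :
    gL f M = f ⬝ᵥ (M *ᵥ f) := rfl

noncomputable def KlL {n : ℕ} (Kmat : Fin n → Matrix (Fin m) (Fin m) ℝ) :
    (Fin n → ℝ) →L[ℝ] Matrix (Fin m) (Fin m) ℝ :=
  ∑ j, (ContinuousLinearMap.proj j).smulRight (Kmat j)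

lemma KlL_apply {n : ℕ} (Kmat : Fin n → Matrix (Fin m) (Fin m) ℝ) (B : Fin n → ℝ) :
    KlL Kmat B = ∑ j, B j • Kmat j := by
  simp [KlL]

lemma hasFDerivAt_compliance {n : ℕ} (Kmat : Fin n → Matrix (Fin m) (Fin m) ℝ)
    (f : Fin m → ℝ) (A : Fin n → ℝ) (hA : (∑ j, A j • Kmat j).PosDef) :
    HasFDerivAt (fun B => f ⬝ᵥ ((∑ j, B j • Kmat j)⁻¹ *ᵥ f))
      ((gL f).comp ((-(ContinuousLinearMap.mulLeftRight ℝ _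
        (∑ j, A j • Kmat j)⁻¹ (∑ j, A j • Kmat j)⁻¹)).comp (KlL Kmat))) A := by
  set M := ∑ j, A j • Kmat j with hM
  have hU : IsUnit M := (Matrix.isUnit_iff_isUnit_det M).2 hA.det_pos.ne'.isUnit
  have h1 : HasFDerivAt (fun B => ∑ j, B j • Kmat j) (KlL Kmat) A := by
    have := (KlL Kmat).hasFDerivAt (x := A)
    simpa [funext (KlL_apply Kmat)] using this
  have h2 : HasFDerivAt Ring.inverse
      (-(ContinuousLinearMap.mulLeftRight ℝ _ ((hU.unit⁻¹ : _ˣ) : Matrix (Fin m) (Fin m) ℝ)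
        ((hU.unit⁻¹ : _ˣ) : Matrix (Fin m) (Fin m) ℝ))) M := by
    simpa [hU.unit_spec] using hasFDerivAt_ringInverse (𝕜 := ℝ) hU.unit
  have hcoe : ((hU.unit⁻¹ : _ˣ) : Matrix (Fin m) (Fin m) ℝ) = M⁻¹ := by
    rw [Matrix.coe_units_inv, hU.unit_spec]
  rw [hcoe] at h2
  have h3 := ((gL f).hasFDerivAt.comp M h2).comp A h1
  have he : (fun B : Fin n → ℝ => f ⬝ᵥ ((∑ j, B j • Kmat j)⁻¹ *ᵥ f)) =
      (⇑(gL f) ∘ Ring.inverse) ∘ (fun B : Fin n → ℝ => ∑ j, B j • Kmat j) := by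
    funext B
    simp only [Function.comp_apply, gL_apply, Matrix.nonsing_inv_eq_ringInverse]
  rw [he]
  exact h3

lemma key_eq {M : Matrix (Fin m) (Fin m) ℝ} (hM : M.PosDef) (f : Fin m → ℝ) :
    f ⬝ᵥ (M⁻¹ *ᵥ f) =
      2 * (f ⬝ᵥ (M⁻¹ *ᵥ f)) - (M⁻¹ *ᵥ f) ⬝ᵥ (M *ᵥ (M⁻¹ *ᵥ f)) := by
  have hdet : IsUnit M.det := hM.det_pos.ne'.isUnit
  have hMu : M *ᵥ (M⁻¹ *ᵥ f) = f := by
    rw [mulVec_mulVec, mul_nonsing_inv _ hdet, one_mulVec]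
  rw [hMu, dotProduct_comm]; ring

lemma posdef_combo {P Q : Matrix (Fin m) (Fin m) ℝ} (hP : P.PosDef) (hQ : Q.PosDef)
    {t s : ℝ} (ht : 0 ≤ t) (hs : 0 ≤ s) (hts : t + s = 1) :
    (t • P + s • Q).PosDef := by
  refine PosDef.of_dotProduct_mulVec_pos ?_ (fun x hx => ?_)
  · have h1 : (t • P)ᴴ = t • P := by
      rw [conjTranspose_smul]; simp [herm_transpose hP.1]
    have h2 : (s • Q)ᴴ = s • Q := by
      rw [conjTranspose_smul]; simp [herm_transpose hQ.1]
    rw [Matrix.IsHermitian, conjTranspose_add, h1, h2]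
  · have hPx : 0 < x ⬝ᵥ (P *ᵥ x) := by simpa using hP.dotProduct_mulVec_pos hx
    have hQx : 0 < x ⬝ᵥ (Q *ᵥ x) := by simpa using hQ.dotProduct_mulVec_pos hx
    have : star x ⬝ᵥ ((t • P + s • Q) *ᵥ x) =
        t * (x ⬝ᵥ (P *ᵥ x)) + s * (x ⬝ᵥ (Q *ᵥ x)) := by
      simp [add_mulVec, smul_mulVec, dotProduct_add]
    rw [this]
    rcases eq_or_lt_of_le ht with h | h
    · rw [← h] at hts ⊢; simp at hts; nlinarith
    · nlinarith

/-- For size optimization with `K A = ∑ i, A i • Kmat i` (each `Kmat i`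
positive semidefinite) and compliance `C A = f ⬝ᵥ (K A)⁻¹ *ᵥ f`, if `K A` is
positive definite then `∂C/∂A i = -(u ⬝ᵥ Kmat i *ᵥ u) ≤ 0` where
`u = (K A)⁻¹ *ᵥ f`, and `C` is convex on the region where `K` is positive
definite. -/
theorem size_opt_compliance {n m : ℕ} (Kmat : Fin n → Matrix (Fin m) (Fin m) ℝ)
    (hK : ∀ i, (Kmat i).PosSemidef) (f : Fin m → ℝ)
    (K : (Fin n → ℝ) → Matrix (Fin m) (Fin m) ℝ)
    (hKdef : ∀ A, K A = ∑ i, A i • Kmat i)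
    (C : (Fin n → ℝ) → ℝ) (hC : ∀ A, C A = f ⬝ᵥ ((K A)⁻¹ *ᵥ f)) :
    (∀ (A : Fin n → ℝ), (K A).PosDef → ∀ i,
        fderiv ℝ C A (Pi.single i 1) =
          -(((K A)⁻¹ *ᵥ f) ⬝ᵥ (Kmat i *ᵥ ((K A)⁻¹ *ᵥ f))) ∧
        fderiv ℝ C A (Pi.single i 1) ≤ 0) ∧
      ConvexOn ℝ {A | (K A).PosDef} C := by
  have hCfun : C = fun B => f ⬝ᵥ ((∑ j, B j • Kmat j)⁻¹ *ᵥ f) := by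
    funext B; rw [hC, hKdef]
  constructor
  · intro A hA i
    rw [hKdef] at hA
    set M := ∑ j, A j • Kmat j with hM
    have hfd := hasFDerivAt_compliance Kmat f A hA
    have hDval : fderiv ℝ C A (Pi.single i 1) =
        -(f ⬝ᵥ ((M⁻¹ * Kmat i * M⁻¹) *ᵥ f)) := by
      rw [hCfun, hfd.fderiv]
      change f ⬝ᵥ ((-(M⁻¹ * KlL Kmat (Pi.single i 1) * M⁻¹)) *ᵥ f) = _
      have hKl : KlL Kmat (Pi.single i 1) = Kmat i := by
        rw [KlL_apply]
        simp [Pi.single_apply, ite_smul]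
      rw [hKl]
      simp [neg_mulVec]
    have hsymM : Mᵀ = M := herm_transpose hA.1
    have hsyminv : (M⁻¹)ᵀ = M⁻¹ := by
      rw [transpose_nonsing_inv, hsymM]
    set u := M⁻¹ *ᵥ f with hu
    have hval : f ⬝ᵥ ((M⁻¹ * Kmat i * M⁻¹) *ᵥ f) = u ⬝ᵥ (Kmat i *ᵥ u) := by
      rw [← mulVec_mulVec, ← mulVec_mulVec, ← hu, symdot hsyminv f (Kmat i *ᵥ u),
        ← hu, dotProduct_comm]
    have hKA : (K A)⁻¹ *ᵥ f = u := by rw [hKdef]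
    have hnn : 0 ≤ u ⬝ᵥ (Kmat i *ᵥ u) := by simpa using (hK i).dotProduct_mulVec_nonneg u
    refine ⟨by rw [hDval, hval, hKA], ?_⟩
    rw [hDval, hval]; linarith
  · constructor
    · intro A hA B hB t s ht hs hts
      simp only [Set.mem_setOf_eq, hKdef] at hA hB ⊢
      have hcomb : (∑ j, (t • A + s • B) j • Kmat j) =
          t • (∑ j, A j • Kmat j) + s • (∑ j, B j • Kmat j) := by
        rw [Finset.smul_sum, Finset.smul_sum, ← Finset.sum_add_distrib]
        refine Finset.sum_congr rfl fun j _ => ?_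
        simp [add_smul, smul_smul]
      rw [hcomb]
      exact posdef_combo hA hB ht hs hts
    · intro A hA B hB t s ht hs hts
      simp only [Set.mem_setOf_eq, hKdef] at hA hB
      set KA := ∑ j, A j • Kmat j with hKA
      set KB := ∑ j, B j • Kmat j with hKB
      have hcomb : (∑ j, (t • A + s • B) j • Kmat j) = t • KA + s • KB := by
        rw [hKA, hKB, Finset.smul_sum, Finset.smul_sum, ← Finset.sum_add_distrib]
        refine Finset.sum_congr rfl fun j _ => ?_
        simp [add_smul, smul_smul]
      have hAt : (t • KA + s • KB).PosDef := posdef_combo hA hB ht hs hts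
      set Kt := t • KA + s • KB with hKt
      set u := Kt⁻¹ *ᵥ f with hu
      have hCt : C (t • A + s • B) = f ⬝ᵥ (Kt⁻¹ *ᵥ f) := by
        rw [hC, hKdef, hcomb]
      have heq := key_eq hAt f
      have hsplit : u ⬝ᵥ (Kt *ᵥ u) = t * (u ⬝ᵥ (KA *ᵥ u)) + s * (u ⬝ᵥ (KB *ᵥ u)) := by
        rw [hKt]
        simp [add_mulVec, smul_mulVec, dotProduct_add]
      have hA' : 2 * (f ⬝ᵥ u) - u ⬝ᵥ (KA *ᵥ u) ≤ f ⬝ᵥ (KA⁻¹ *ᵥ f) := key_ineq hA f u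
      have hB' : 2 * (f ⬝ᵥ u) - u ⬝ᵥ (KB *ᵥ u) ≤ f ⬝ᵥ (KB⁻¹ *ᵥ f) := key_ineq hB f u
      have hCA : C A = f ⬝ᵥ (KA⁻¹ *ᵥ f) := by rw [hC, hKdef]
      have hCB : C B = f ⬝ᵥ (KB⁻¹ *ᵥ f) := by rw [hC, hKdef]
      rw [hCt, hCA, hCB, ← hu] at *
      have h1 := mul_le_mul_of_nonneg_left hA' ht
      have h2 := mul_le_mul_of_nonneg_left hB' hs
      simp only [smul_eq_mul]
      have h3 : t * (f ⬝ᵥ u) + s * (f ⬝ᵥ u) = f ⬝ᵥ u := by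
        rw [← add_mul, hts, one_mul]
      linarith
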